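/- Let 𝒜 be a homogeneous linear differential operator of order k on ℝ^m with values in ℝ^N acting on ℝ^n-valued functions, of constant rank and balanced, and let 𝓑 (of order k', with matrices B_α ∈ ℝ^{n×n'}) be a potential for 𝒜. Then the linear map T from the space of n'-tuples of homogeneous polynomials of degree k' on ℝ^m to ℝ^n, defined by T(q) = 𝓑(q) = Σ_{|α|=k'} B_α ∂^α q (which is a constant vector when q is homogeneous of degree k'), is surjective: for every v ∈ ℝ^n there exists such a q with Σ_{|α|=k'} B_α ∂^α q ≡ v. -/

import Mathlib

open MeasureTheory Metric Set Matrix Filter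

/-- Multi-indices on `Fin m` of total degree `k`. -/
def mIdx (m k : ℕ) : Finset (Fin m → ℕ) :=
  (Fintype.piFinset fun _ => Finset.range (k + 1)).filter fun α => ∑ i, α i = k

/-- Partial derivative in the `i`-th coordinate direction. -/
noncomputable def pderiv' {m : ℕ} {E : Type*} [NormedAddCommGroup E] [NormedSpace ℝ E]
    (i : Fin m) (f : (Fin m → ℝ) → E) : (Fin m → ℝ) → E :=
  fun x => fderiv ℝ f x (Pi.single i 1)

/-- Iterated partial derivative `∂^α`. -/
noncomputable def mderiv {m : ℕ} {E : Type*} [NormedAddCommGroup E] [NormedSpace ℝ E]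
    (α : Fin m → ℕ) (f : (Fin m → ℝ) → E) : (Fin m → ℝ) → E :=
  (List.finRange m).foldr (fun i g => (pderiv' i)^[α i] g) f

/-- The symbol `𝔸(ξ) = Σ_{|α|=k} ξ^α A_α` of a homogeneous operator of order `k`. -/
noncomputable def opSymb {m n N : ℕ} (k : ℕ) (A : (Fin m → ℕ) → Matrix (Fin N) (Fin n) ℝ)
    (ξ : Fin m → ℝ) : Matrix (Fin N) (Fin n) ℝ :=
  ∑ α ∈ mIdx m k, (∏ i, ξ i ^ α i) • A α

/-- The wave cone `Λ_𝒜 = ⋃_{ξ ≠ 0} ker 𝔸(ξ)`. -/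
def waveCone {m n N : ℕ} (k : ℕ) (A : (Fin m → ℕ) → Matrix (Fin N) (Fin n) ℝ) :
    Set (Fin n → ℝ) :=
  {η | ∃ ξ : Fin m → ℝ, ξ ≠ 0 ∧ (opSymb k A ξ).mulVec η = 0}

/-- `𝒜` has constant rank. -/
def ConstRank {m n N : ℕ} (k : ℕ) (A : (Fin m → ℕ) → Matrix (Fin N) (Fin n) ℝ) : Prop :=
  ∃ r, ∀ ξ : Fin m → ℝ, ξ ≠ 0 → (opSymb k A ξ).rank = r

/-- `𝒜` is balanced: the wave cone spans `ℝ^n`. -/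
def IsBalanced {m n N : ℕ} (k : ℕ) (A : (Fin m → ℕ) → Matrix (Fin N) (Fin n) ℝ) : Prop :=
  Submodule.span ℝ (waveCone k A) = ⊤

/-- `𝓑` (order `k'`, coefficients `B`) is a potential for `𝒜` (order `k`, coefficients `A`). -/
def IsPotential {m n n' N : ℕ} (k k' : ℕ) (A : (Fin m → ℕ) → Matrix (Fin N) (Fin n) ℝ)
    (B : (Fin m → ℕ) → Matrix (Fin n) (Fin n') ℝ) : Prop :=
  ∀ ξ : Fin m → ℝ, ξ ≠ 0 →
    LinearMap.ker (opSymb k A ξ).mulVecLin = LinearMap.range (opSymb k' B ξ).mulVecLin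

/-- Pointwise action `𝓑(V)(x) = Σ_{|α|=k'} B_α ∂^α V (x)`. -/
noncomputable def opApply {m n n' : ℕ} (k' : ℕ) (B : (Fin m → ℕ) → Matrix (Fin n) (Fin n') ℝ)
    (V : (Fin m → ℝ) → (Fin n' → ℝ)) : (Fin m → ℝ) → (Fin n → ℝ) :=
  fun x => ∑ α ∈ mIdx m k', (B α).mulVec (mderiv α V x)

/-- `𝒜(u) = 0` on `Ω` in the sense of distributions. -/
def AFree {m n N : ℕ} (k : ℕ) (A : (Fin m → ℕ) → Matrix (Fin N) (Fin n) ℝ)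
    (Ω : Set (Fin m → ℝ)) (u : (Fin m → ℝ) → (Fin n → ℝ)) : Prop :=
  ∀ φ : (Fin m → ℝ) → (Fin N → ℝ), ContDiff ℝ (⊤ : ℕ∞) φ → HasCompactSupport φ → tsupport φ ⊆ Ω →
    ∫ x in Ω, u x ⬝ᵥ (∑ α ∈ mIdx m k, (A α)ᵀ.mulVec (mderiv α φ x)) = 0

/-- `f` coincides with a polynomial of degree at most `d`. -/
def IsPolyDegLE {m : ℕ} (d : ℕ) (f : (Fin m → ℝ) → ℝ) : Prop :=
  ∃ p : MvPolynomial (Fin m) ℝ, p.totalDegree ≤ d ∧ ∀ x, f x = MvPolynomial.eval x p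

/-- `f` is piecewise a polynomial of degree (at most) `d` on `Ω`. -/
def PiecewisePolyOn {m : ℕ} (d : ℕ) (Ω : Set (Fin m → ℝ)) (f : (Fin m → ℝ) → ℝ) : Prop :=
  ∃ U : ℕ → Set (Fin m → ℝ), (∀ j, IsOpen (U j)) ∧ (∀ j, U j ⊆ Ω) ∧
    (Pairwise fun i j => Disjoint (U i) (U j)) ∧ volume (Ω \ ⋃ j, U j) = 0 ∧
    ∀ j, ∃ p : MvPolynomial (Fin m) ℝ, p.totalDegree ≤ d ∧ ∀ x ∈ U j, f x = MvPolynomial.eval x p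

/-- Bound on the `W^{k',∞} ∩ C^{k'-1}(Ω̄)` norm: all derivatives of order `< k'` are bounded
by `C` on `Ω̄` and the order-`k'` derivatives are essentially bounded by `C` on `Ω`. -/
def NormLeWC {m n' : ℕ} (k' : ℕ) (Ω : Set (Fin m → ℝ)) (V : (Fin m → ℝ) → (Fin n' → ℝ))
    (C : ℝ) : Prop :=
  (∀ j < k', ∀ x ∈ closure Ω, ‖iteratedFDerivWithin ℝ j V (closure Ω) x‖ ≤ C) ∧
  (∀ᵐ x ∂(volume.restrict Ω), ‖iteratedFDeriv ℝ k' V x‖ ≤ C)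

/-- `‖V - W‖_{C^{k'-1}(Ω̄)} ≤ ε` (all derivatives of order `< k'`). -/
def CloseCLT {m n' : ℕ} (k' : ℕ) (Ω : Set (Fin m → ℝ)) (V W : (Fin m → ℝ) → (Fin n' → ℝ))
    (ε : ℝ) : Prop :=
  ∀ j < k', ∀ x ∈ closure Ω,
    ‖iteratedFDerivWithin ℝ j V (closure Ω) x - iteratedFDerivWithin ℝ j W (closure Ω) x‖ ≤ ε

/-- `V` and `W` agree, together with all derivatives of order `< k'`, on `∂Ω`. -/
def AgreeOnBoundaryLT {m n' : ℕ} (k' : ℕ) (Ω : Set (Fin m → ℝ))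
    (V W : (Fin m → ℝ) → (Fin n' → ℝ)) : Prop :=
  ∀ j < k', ∀ x ∈ frontier Ω,
    iteratedFDerivWithin ℝ j V (closure Ω) x = iteratedFDerivWithin ℝ j W (closure Ω) x

/-- `E` is essentially open in `Ω`. -/
def EssOpenIn {m : ℕ} (Ω E : Set (Fin m → ℝ)) : Prop :=
  volume (frontier E ∩ Ω) = 0

/-- A `Λ`-convex function. -/
def LamConvex {n : ℕ} (Λ : Set (Fin n → ℝ)) (f : (Fin n → ℝ) → ℝ) : Prop :=
  ∀ a b : Fin n → ℝ, a - b ∈ Λ → ∀ t : ℝ, t ∈ Set.Icc (0:ℝ) 1 →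
    f (t • a + (1 - t) • b) ≤ t * f a + (1 - t) * f b

/-- The `Λ`-convex hull of a (compact) set `K`: barycentres of laminates supported in `K`. -/
def lamHull {n : ℕ} (Λ : Set (Fin n → ℝ)) (K : Set (Fin n → ℝ)) : Set (Fin n → ℝ) :=
  {x | ∃ ν : Measure (Fin n → ℝ), IsProbabilityMeasure ν ∧ ν Kᶜ = 0 ∧
        x = ∫ y, y ∂ν ∧
        ∀ f : (Fin n → ℝ) → ℝ, Continuous f → LamConvex Λ f → f x ≤ ∫ y, f y ∂ν}

/-- The `Λ`-convex hull of an open set. -/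
def lamHullOpen {n : ℕ} (Λ : Set (Fin n → ℝ)) (U : Set (Fin n → ℝ)) : Set (Fin n → ℝ) :=
  ⋃ K ∈ {K : Set (Fin n → ℝ) | IsCompact K ∧ K ⊆ U}, lamHull Λ K



section PotentialSurjAux

open Finset

variable {m n' : ℕ} {T : Type*}

noncomputable def linCLM (ξ : Fin m → ℝ) : (Fin m → ℝ) →L[ℝ] ℝ :=
  ∑ i, ξ i • (ContinuousLinearMap.proj i : (Fin m → ℝ) →L[ℝ] ℝ)

lemma linCLM_single (ξ : Fin m → ℝ) (i : Fin m) :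
    linCLM ξ (Pi.single i 1) = ξ i := by
  simp [linCLM, ContinuousLinearMap.sum_apply, Pi.single_apply, mul_ite,
    Finset.sum_ite_eq']

lemma hasFDerivAt_lin (ξ : Fin m → ℝ) (x : Fin m → ℝ) :
    HasFDerivAt (fun y : Fin m → ℝ => ∑ i, ξ i * y i) (linCLM ξ) x := by
  exact HasFDerivAt.fun_sum fun i _ =>
    ((ContinuousLinearMap.proj (R := ℝ) (φ := fun _ : Fin m => ℝ) i).hasFDerivAt).const_mul (ξ i)

noncomputable def Fq (s : Finset T) (c : T → ℝ) (ξ : T → Fin m → ℝ)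
    (w : T → Fin n' → ℝ) (p : ℕ) : (Fin m → ℝ) → (Fin n' → ℝ) :=
  fun x => ∑ t ∈ s, (c t * (∑ i, ξ t i * x i) ^ p) • w t

lemma pderiv'_Fq (s : Finset T) (c : T → ℝ) (ξ : T → Fin m → ℝ)
    (w : T → Fin n' → ℝ) (p : ℕ) (i : Fin m) :
    pderiv' i (Fq s c ξ w p) = Fq s (fun t => c t * p * ξ t i) ξ w (p - 1) := by
  funext x
  have h : ∀ t ∈ s, HasFDerivAt
      (fun y : Fin m → ℝ => (c t * (∑ i', ξ t i' * y i') ^ p) • w t)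
      (ContinuousLinearMap.smulRight
        ((c t) • (((p : ℝ) * (∑ i', ξ t i' * x i') ^ (p - 1)) • linCLM (ξ t))) (w t)) x := by
    intro t _
    exact ((((hasDerivAt_pow p _).comp_hasFDerivAt x
      (hasFDerivAt_lin (ξ t) x)).const_mul (c t)).smul_const (w t))
  have hsum := HasFDerivAt.fun_sum h
  show fderiv ℝ (Fq s c ξ w p) x (Pi.single i 1) = _
  have : Fq s c ξ w p = fun y => ∑ t ∈ s,
      (c t * (∑ i', ξ t i' * y i') ^ p) • w t := rfl
  rw [this, hsum.fderiv]
  rw [ContinuousLinearMap.sum_apply]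
  refine Finset.sum_congr rfl fun t _ => ?_
  rw [ContinuousLinearMap.smulRight_apply, ContinuousLinearMap.smul_apply,
    ContinuousLinearMap.smul_apply, linCLM_single]
  simp only [smul_eq_mul, Fq]
  congr 1
  ring

lemma iter_pderiv'_Fq (s : Finset T) (c : T → ℝ) (ξ : T → Fin m → ℝ)
    (w : T → Fin n' → ℝ) (p : ℕ) (i : Fin m) (a : ℕ) :
    (pderiv' i)^[a] (Fq s c ξ w p)
      = Fq s (fun t => c t * (∏ j ∈ Finset.range a, ((p - j : ℕ) : ℝ)) * ξ t i ^ a)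
          ξ w (p - a) := by
  induction a with
  | zero => simp [Fq]
  | succ a ih =>
    rw [Function.iterate_succ_apply', ih, pderiv'_Fq]
    funext x
    simp only [Fq, Nat.sub_sub]
    refine Finset.sum_congr rfl fun t _ => ?_
    congr 1
    rw [Finset.prod_range_succ, pow_succ]
    ring

lemma foldr_Fq (s : Finset T) (c : T → ℝ) (ξ : T → Fin m → ℝ)
    (w : T → Fin n' → ℝ) (p : ℕ) (α : Fin m → ℕ) (L : List (Fin m)) :
    List.foldr (fun i g => (pderiv' i)^[α i] g) (Fq s c ξ w p) L
      = Fq s (fun t => c t * (∏ j ∈ Finset.range ((L.map α).sum), ((p - j : ℕ) : ℝ))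
          * ((L.map (fun i => ξ t i ^ α i)).prod)) ξ w (p - (L.map α).sum) := by
  induction L with
  | nil => simp [Fq]
  | cons i L' ih =>
    rw [List.foldr_cons, ih, iter_pderiv'_Fq]
    have hS : α i + (L'.map α).sum = (L'.map α).sum + α i := Nat.add_comm _ _
    funext x
    simp only [Fq, List.map_cons, List.sum_cons, List.prod_cons, hS, Nat.sub_sub]
    refine Finset.sum_congr rfl fun t _ => ?_
    congr 1
    rw [Finset.prod_range_add]
    ring

lemma prod_range_sub_eq_factorial (p : ℕ) :
    ∏ j ∈ Finset.range p, (p - j) = p.factorial := by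
  induction p with
  | zero => simp
  | succ p ih =>
    rw [Finset.prod_range_succ']
    simp only [Nat.succ_sub_succ]
    rw [ih, Nat.sub_zero, Nat.factorial_succ, Nat.mul_comm]

lemma mderiv_Fq (s : Finset T) (c : T → ℝ) (ξ : T → Fin m → ℝ)
    (w : T → Fin n' → ℝ) (p : ℕ) (α : Fin m → ℕ) (hα : ∑ i, α i = p) :
    mderiv α (Fq s c ξ w p)
      = fun _ => ∑ t ∈ s, ((p.factorial : ℝ) * c t * ∏ i, ξ t i ^ α i) • w t := by
  have hS : ((List.finRange m).map α).sum = p := by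
    rw [← Fin.sum_univ_def]; exact hα
  rw [mderiv, foldr_Fq, hS]
  funext x
  simp only [Fq, Nat.sub_self, pow_zero, mul_one]
  refine Finset.sum_congr rfl fun t _ => ?_
  congr 1
  rw [← Fin.prod_univ_def, ← Nat.cast_prod, prod_range_sub_eq_factorial]
  ring

lemma opSymb_mulVec {m n n' : ℕ} (k' : ℕ) (B : (Fin m → ℕ) → Matrix (Fin n) (Fin n') ℝ)
    (ξ : Fin m → ℝ) (w : Fin n' → ℝ) :
    (opSymb k' B ξ).mulVec w = ∑ α ∈ mIdx m k', (∏ i, ξ i ^ α i) • (B α).mulVec w := by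
  funext j
  simp only [opSymb, Matrix.mulVec, dotProduct, Finset.sum_apply, Matrix.sum_apply,
    Matrix.smul_apply, smul_eq_mul, Pi.smul_apply, Finset.sum_mul, Finset.mul_sum]
  rw [Finset.sum_comm]
  exact Finset.sum_congr rfl fun α _ => Finset.sum_congr rfl fun l _ => by ring

lemma mulVec_sum_smul {n n' : ℕ} (B : Matrix (Fin n) (Fin n') ℝ) {T : Type*} (s : Finset T)
    (r : T → ℝ) (u : T → Fin n' → ℝ) :
    B.mulVec (∑ t ∈ s, r t • u t) = ∑ t ∈ s, r t • B.mulVec (u t) := by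
  rw [← Matrix.mulVecLin_apply, map_sum]
  simp only [Matrix.mulVecLin_apply, Matrix.mulVec_smul]

end PotentialSurjAux

/-- For a balanced constant-rank operator `𝒜` with potential `𝓑` of order `k'`, the map
`q ↦ 𝓑(q)` from `n'`-tuples of homogeneous polynomials of degree `k'` to `ℝ^n` is surjective. -/
theorem potential_surjective_on_homogeneous_polynomials
    {k k' m n n' N : ℕ}
    (A : (Fin m → ℕ) → Matrix (Fin N) (Fin n) ℝ)
    (B : (Fin m → ℕ) → Matrix (Fin n) (Fin n') ℝ)
    (hcr : ConstRank k A) (hbal : IsBalanced k A) (hpot : IsPotential k k' A B)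
    (v : Fin n → ℝ) :
    ∃ q : (Fin m → ℝ) → (Fin n' → ℝ),
      (∀ j : Fin n', ∃ p : MvPolynomial (Fin m) ℝ,
        p.IsHomogeneous k' ∧ ∀ x, q x j = MvPolynomial.eval x p) ∧
      (∀ x, opApply k' B q x = v) := by
  classical
  have hv : v ∈ Submodule.span ℝ (waveCone k A) := by rw [hbal]; exact Submodule.mem_top
  obtain ⟨cf, hsupp, hsum⟩ := Submodule.mem_span_set.mp hv
  have hch : ∀ t ∈ cf.support, ∃ ξw : (Fin m → ℝ) × (Fin n' → ℝ),
      ξw.1 ≠ 0 ∧ (opSymb k' B ξw.1).mulVec ξw.2 = t := by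
    intro t ht
    obtain ⟨ξ, hξ, hker⟩ := hsupp ht
    have hmem : t ∈ LinearMap.ker (opSymb k A ξ).mulVecLin := by
      simpa [LinearMap.mem_ker, Matrix.mulVecLin_apply] using hker
    rw [hpot ξ hξ] at hmem
    obtain ⟨w, hw⟩ := hmem
    exact ⟨⟨ξ, w⟩, hξ, by simpa [Matrix.mulVecLin_apply] using hw⟩
  choose! ξw hξw1 hξw2 using hch
  set s : Finset (Fin n → ℝ) := cf.support with hs
  set ξf : (Fin n → ℝ) → (Fin m → ℝ) := fun t => (ξw t).1 with hξf
  set wf : (Fin n → ℝ) → (Fin n' → ℝ) := fun t => (ξw t).2 with hwf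
  set c : (Fin n → ℝ) → ℝ := fun t => cf t / (k'.factorial : ℝ) with hc
  refine ⟨Fq s c ξf wf k', ?_, ?_⟩
  · intro j
    refine ⟨∑ t ∈ s, MvPolynomial.C (c t * wf t j) *
        (∑ i, MvPolynomial.C (ξf t i) * MvPolynomial.X i) ^ k', ?_, ?_⟩
    · refine MvPolynomial.IsHomogeneous.sum _ _ _ fun t _ => ?_
      have h1 : (∑ i, MvPolynomial.C (ξf t i) * MvPolynomial.X i :
          MvPolynomial (Fin m) ℝ).IsHomogeneous 1 :=
        MvPolynomial.IsHomogeneous.sum _ _ _ fun i _ =>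
          MvPolynomial.isHomogeneous_C_mul_X _ _
      simpa using (h1.pow k').C_mul (c t * wf t j)
    · intro x
      simp only [Fq, Finset.sum_apply, Pi.smul_apply, smul_eq_mul, map_sum,
        MvPolynomial.eval_mul, MvPolynomial.eval_pow, MvPolynomial.eval_C,
        MvPolynomial.eval_X]
      exact Finset.sum_congr rfl fun t _ => by ring
  · intro x
    rw [opApply]
    have step1 : ∀ α ∈ mIdx m k',
        (B α).mulVec (mderiv α (Fq s c ξf wf k') x)
          = ∑ t ∈ s, ((k'.factorial : ℝ) * c t * ∏ i, ξf t i ^ α i) • (B α).mulVec (wf t) := by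
      intro α hα
      rw [mderiv_Fq s c ξf wf k' α (Finset.mem_filter.mp hα).2]
      exact mulVec_sum_smul _ _ _ _
    rw [Finset.sum_congr rfl step1, Finset.sum_comm]
    have step2 : ∀ t ∈ s,
        (∑ α ∈ mIdx m k', ((k'.factorial : ℝ) * c t * ∏ i, ξf t i ^ α i) • (B α).mulVec (wf t))
          = cf t • t := by
      intro t ht
      have : ∀ α ∈ mIdx m k',
          ((k'.factorial : ℝ) * c t * ∏ i, ξf t i ^ α i) • (B α).mulVec (wf t)
            = ((k'.factorial : ℝ) * c t) • ((∏ i, ξf t i ^ α i) • (B α).mulVec (wf t)) := by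
        intro α _
        rw [smul_smul, mul_assoc]
      rw [Finset.sum_congr rfl this, ← Finset.smul_sum, ← opSymb_mulVec, hξw2 t ht]
      congr 1
      have hfac : (k'.factorial : ℝ) ≠ 0 := Nat.cast_ne_zero.mpr (Nat.factorial_ne_zero k')
      simp only [hc]
      field_simp
    rw [Finset.sum_congr rfl step2]
    rw [Finsupp.sum] at hsum
    exact hsum
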